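/- Let L be a real symmetric Laplacian of a connected graph with eigenvalues 0 = λ^[0] < λ^[1] ≤ … ≤ λ^[N−1] and orthonormal eigenvectors v^[ℓ], α > 0, ω > 0, and nodes k, i with graph distance d = d(k,i) ≥ 1. Define A_i^(k)(ω) = ω·|Σ_ℓ v_k^[ℓ]v_i^[ℓ]/(−ω² + iαω + λ^[ℓ])|. Then there exists a constant Φ ∈ ℝ (depending on L, α, k, i but not on ω) such that ω^{2d+1}·A_i^(k)(ω) → |Φ| as ω → ∞, where Φ is a fixed multiple of (L^d)_{ki} up to lower-order corrections; in particular A_i^(k)(ω) = O(ω^{−2d−1}). -/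

import Mathlib

open Matrix Complex Filter Asymptotics

theorem high_frequency_localized_response
    (N : ℕ) [NeZero N] (L : Matrix (Fin N) (Fin N) ℝ) (hLsymm : L.IsSymm)
    (lam : Fin N → ℝ) (v : Fin N → Fin N → ℝ)
    (heig : ∀ ℓ, L *ᵥ v ℓ = lam ℓ • v ℓ)
    (horth : ∀ ℓ ℓ', ∑ j, v ℓ j * v ℓ' j = if ℓ = ℓ' then 1 else 0)
    (hlam0 : lam 0 = 0) (hpos : ∀ ℓ, ℓ ≠ 0 → 0 < lam ℓ)
    (G : SimpleGraph (Fin N)) (hG : ∀ u v : Fin N, G.Adj u v ↔ u ≠ v ∧ L u v ≠ 0)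
    (α : ℝ) (hα : 0 < α) (k i : Fin N) (hd : 1 ≤ G.dist k i) :
    ∃ Φ : ℝ,
      Tendsto
        (fun ω : ℝ => ω ^ (2 * G.dist k i + 1) *
          (ω * ‖(∑ ℓ, ((v ℓ k : ℂ) * (v ℓ i : ℂ)) /
            (-(ω : ℂ) ^ 2 + I * (α : ℂ) * (ω : ℂ) + (lam ℓ : ℂ)))‖))
        atTop (nhds |Φ|) ∧
      (fun ω : ℝ => ω * ‖(∑ ℓ, ((v ℓ k : ℂ) * (v ℓ i : ℂ)) /
          (-(ω : ℂ) ^ 2 + I * (α : ℂ) * (ω : ℂ) + (lam ℓ : ℂ)))‖)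
        =O[atTop] fun ω : ℝ => (ω ^ (2 * G.dist k i + 1))⁻¹ := by
  classical
  set d := G.dist k i with hddef
  set n := d + 1 with hndef
  -- the complex "z" variable
  have hDim : ∀ (c : ℝ) (ω : ℝ),
      ((-(ω : ℂ) ^ 2 + I * (α : ℂ) * (ω : ℂ)) + (c : ℂ)).im = α * ω := by
    intro c ω
    simp [pow_two, Complex.add_im, Complex.mul_im]
  have hDne : ∀ (c : ℝ) (ω : ℝ), 0 < ω →
      (-(ω : ℂ) ^ 2 + I * (α : ℂ) * (ω : ℂ)) + (c : ℂ) ≠ 0 := by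
    intro c ω hω h
    have h2 := hDim c ω
    rw [h] at h2
    simp only [Complex.zero_im] at h2
    have h3 : α * ω ≠ 0 := by positivity
    exact h3 h2.symm
  have hzne : ∀ ω : ℝ, 0 < ω → (-(ω : ℂ) ^ 2 + I * (α : ℂ) * (ω : ℂ)) ≠ 0 := by
    intro ω hω h
    have := hDne 0 ω hω
    apply this
    rw [h]
    simp
  -- spectral facts
  have hpow : ∀ (m : ℕ) (ℓ : Fin N), (L ^ m) *ᵥ v ℓ = lam ℓ ^ m • v ℓ := by
    intro m ℓ
    induction m with
    | zero => simp
    | succ m ih =>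
      rw [pow_succ, ← Matrix.mulVec_mulVec, heig ℓ, Matrix.mulVec_smul, ih,
        smul_smul, ← pow_succ']
  have hcomp : ∀ a b : Fin N, ∑ ℓ, v ℓ a * v ℓ b = if a = b then 1 else 0 := by
    have hVVt : (Matrix.of v) * (Matrix.of v)ᵀ = (1 : Matrix (Fin N) (Fin N) ℝ) := by
      ext ℓ ℓ'
      simpa [Matrix.mul_apply, Matrix.one_apply] using horth ℓ ℓ'
    have hVtV := mul_eq_one_comm.mp hVVt
    intro a b
    have h : ((Matrix.of v)ᵀ * Matrix.of v) a b = (1 : Matrix (Fin N) (Fin N) ℝ) a b := by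
      rw [hVtV]
    simpa [Matrix.mul_apply, Matrix.one_apply] using h
  have hS : ∀ m : ℕ, ∑ ℓ, v ℓ k * v ℓ i * lam ℓ ^ m = (L ^ m) k i := by
    intro m
    have h1 : ∀ ℓ, ((L ^ m) *ᵥ v ℓ) k = lam ℓ ^ m * v ℓ k := by
      intro ℓ; rw [hpow m ℓ]; simp
    calc ∑ ℓ, v ℓ k * v ℓ i * lam ℓ ^ m
        = ∑ ℓ, v ℓ i * ((L ^ m) *ᵥ v ℓ) k := by
          refine Finset.sum_congr rfl fun ℓ _ => ?_
          rw [h1]; ring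
      _ = ∑ ℓ, ∑ j, (L ^ m) k j * (v ℓ i * v ℓ j) := by
          refine Finset.sum_congr rfl fun ℓ _ => ?_
          simp only [Matrix.mulVec, dotProduct, Finset.mul_sum]
          refine Finset.sum_congr rfl fun j _ => ?_
          ring
      _ = ∑ j, (L ^ m) k j * ∑ ℓ, v ℓ i * v ℓ j := by
          rw [Finset.sum_comm]
          refine Finset.sum_congr rfl fun j _ => ?_
          rw [Finset.mul_sum]
      _ = (L ^ m) k i := by
          simp only [hcomp, mul_ite, mul_one, mul_zero]
          rw [Finset.sum_ite_eq Finset.univ i (fun j => (L ^ m) k j)]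
          simp
  -- locality: (L^m) k j = 0 when m < dist k j
  have hwalk : ∀ (m : ℕ) (j : Fin N), (L ^ m) k j ≠ 0 → ∃ p : G.Walk k j, p.length ≤ m := by
    intro m
    induction m with
    | zero =>
      intro j hj
      rw [pow_zero, Matrix.one_apply] at hj
      by_cases h : k = j
      · subst h; exact ⟨SimpleGraph.Walk.nil, by simp⟩
      · simp [h] at hj
    | succ m ih =>
      intro j hj
      rw [pow_succ, Matrix.mul_apply] at hj
      obtain ⟨u, -, hu⟩ := Finset.exists_ne_zero_of_sum_ne_zero hj
      have h1 : (L ^ m) k u ≠ 0 := fun h => hu (by simp [h])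
      have h2 : L u j ≠ 0 := fun h => hu (by simp [h])
      obtain ⟨p, hp⟩ := ih u h1
      by_cases h : u = j
      · subst h; exact ⟨p, hp.trans (Nat.le_succ m)⟩
      · exact ⟨p.concat ((hG u j).mpr ⟨h, h2⟩), by
          rw [SimpleGraph.Walk.length_concat]; omega⟩
  have hzero : ∀ m : ℕ, m < d → ∑ ℓ, v ℓ k * v ℓ i * lam ℓ ^ m = 0 := by
    intro m hm
    rw [hS]
    by_contra h
    obtain ⟨p, hp⟩ := hwalk m i h
    have := SimpleGraph.dist_le p
    omega
  -- the constant
  set Sd : ℝ := ∑ ℓ, v ℓ k * v ℓ i * lam ℓ ^ d with hSddef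
  set C : ℂ := (-1 : ℂ) ^ d * (Sd : ℂ) with hCdef
  -- cast lemma
  have hinner : ∀ m : ℕ, ∑ ℓ, (v ℓ k : ℂ) * (v ℓ i : ℂ) * (-(lam ℓ : ℂ)) ^ m
      = (-1 : ℂ) ^ m * ((∑ ℓ, v ℓ k * v ℓ i * lam ℓ ^ m : ℝ) : ℂ) := by
    intro m
    push_cast
    rw [Finset.mul_sum]
    refine Finset.sum_congr rfl fun ℓ _ => ?_
    rw [neg_pow]
    ring
  -- the remainder function
  set R : ℝ → ℂ := fun ω => ∑ ℓ, (v ℓ k : ℂ) * (v ℓ i : ℂ) * (-(lam ℓ : ℂ)) ^ n /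
      ((-(ω : ℂ) ^ 2 + I * (α : ℂ) * (ω : ℂ)) + (lam ℓ : ℂ)) with hRdef
  -- key algebraic identity
  have hident : ∀ ω : ℝ, 0 < ω →
      (∑ ℓ, ((v ℓ k : ℂ) * (v ℓ i : ℂ)) /
        (-(ω : ℂ) ^ 2 + I * (α : ℂ) * (ω : ℂ) + (lam ℓ : ℂ)))
      = (C + R ω) / (-(ω : ℂ) ^ 2 + I * (α : ℂ) * (ω : ℂ)) ^ n := by
    intro ω hω
    have hz0 := hzne ω hω
    have step0 : ∀ a z w : ℂ, z ≠ 0 → z + w ≠ 0 →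
        a / (z + w)
        = (a * ∑ t ∈ Finset.range n, z ^ t * (-w) ^ (n - 1 - t)) / z ^ n
          + (a * (-w) ^ n / (z + w)) / z ^ n := by
      intro a z w hz hD
      have hgeo := geom_sum₂_mul z (-w) n
      rw [sub_neg_eq_add] at hgeo
      set T := ∑ t ∈ Finset.range n, z ^ t * (-w) ^ (n - 1 - t) with hT
      have hzn : z ^ n ≠ 0 := pow_ne_zero n hz
      have h1 : (a * T) / z ^ n + (a * (-w) ^ n / (z + w)) / z ^ n
          = (a * T * (z + w) + a * (-w) ^ n) / (z ^ n * (z + w)) := by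
        field_simp
      have h2 : a * T * (z + w) + a * (-w) ^ n = a * z ^ n := by
        linear_combination a * hgeo
      rw [h1, h2, mul_comm a (z ^ n), mul_div_mul_left _ _ hzn]
    have step : ∀ ℓ : Fin N,
        ((v ℓ k : ℂ) * (v ℓ i : ℂ)) /
          (-(ω : ℂ) ^ 2 + I * (α : ℂ) * (ω : ℂ) + (lam ℓ : ℂ))
        = ((v ℓ k : ℂ) * (v ℓ i : ℂ) *
            ∑ t ∈ Finset.range n, (-(ω : ℂ) ^ 2 + I * (α : ℂ) * (ω : ℂ)) ^ t *
              (-(lam ℓ : ℂ)) ^ (n - 1 - t)) / (-(ω : ℂ) ^ 2 + I * (α : ℂ) * (ω : ℂ)) ^ n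
          + ((v ℓ k : ℂ) * (v ℓ i : ℂ) * (-(lam ℓ : ℂ)) ^ n /
              ((-(ω : ℂ) ^ 2 + I * (α : ℂ) * (ω : ℂ)) + (lam ℓ : ℂ))) /
            (-(ω : ℂ) ^ 2 + I * (α : ℂ) * (ω : ℂ)) ^ n :=
      fun ℓ => step0 _ _ _ hz0 (hDne (lam ℓ) ω hω)
    rw [Finset.sum_congr rfl fun ℓ _ => step ℓ, Finset.sum_add_distrib,
      ← Finset.sum_div, ← Finset.sum_div, ← add_div]
    congr 1
    congr 1
    -- ∑ ℓ cc * T = C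
    simp only [Finset.mul_sum]
    rw [Finset.sum_comm]
    have hterm : ∀ t ∈ Finset.range n,
        (∑ ℓ, (v ℓ k : ℂ) * (v ℓ i : ℂ) *
          ((-(ω : ℂ) ^ 2 + I * (α : ℂ) * (ω : ℂ)) ^ t * (-(lam ℓ : ℂ)) ^ (n - 1 - t)))
        = (-(ω : ℂ) ^ 2 + I * (α : ℂ) * (ω : ℂ)) ^ t *
            ((-1 : ℂ) ^ (n - 1 - t) *
              ((∑ ℓ, v ℓ k * v ℓ i * lam ℓ ^ (n - 1 - t) : ℝ) : ℂ)) := by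
      intro t _
      rw [← hinner, Finset.mul_sum]
      refine Finset.sum_congr rfl fun ℓ _ => ?_
      ring
    rw [Finset.sum_congr rfl hterm]
    rw [Finset.sum_eq_single 0]
    · have : n - 1 - 0 = d := by omega
      rw [this]
      simp only [hCdef, hSddef, pow_zero, one_mul]
    · intro t ht ht0
      have ht' : t < n := Finset.mem_range.mp ht
      have : n - 1 - t < d := by omega
      rw [hzero _ this]
      simp
    · intro h
      exact absurd (Finset.mem_range.mpr (by omega)) h
  -- limits
  have hR0 : Tendsto R atTop (nhds 0) := by
    have hterm : ∀ ℓ : Fin N,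
        Tendsto (fun ω : ℝ => (v ℓ k : ℂ) * (v ℓ i : ℂ) * (-(lam ℓ : ℂ)) ^ n /
          ((-(ω : ℂ) ^ 2 + I * (α : ℂ) * (ω : ℂ)) + (lam ℓ : ℂ))) atTop (nhds 0) := by
      intro ℓ
      have hinv : Tendsto (fun ω : ℝ =>
          ((-(ω : ℂ) ^ 2 + I * (α : ℂ) * (ω : ℂ)) + (lam ℓ : ℂ))⁻¹) atTop (nhds 0) := by
        rw [tendsto_zero_iff_norm_tendsto_zero]
        have hnorm : Tendsto (fun ω : ℝ =>
            ‖(-(ω : ℂ) ^ 2 + I * (α : ℂ) * (ω : ℂ)) + (lam ℓ : ℂ)‖) atTop atTop := by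
          refine tendsto_atTop_mono' atTop ?_ (Tendsto.const_mul_atTop hα tendsto_id)
          filter_upwards [eventually_ge_atTop (0:ℝ)] with ω hω
          have h1 := Complex.abs_im_le_norm
            ((-(ω : ℂ) ^ 2 + I * (α : ℂ) * (ω : ℂ)) + (lam ℓ : ℂ))
          rw [hDim (lam ℓ) ω] at h1
          calc α * ω ≤ |α * ω| := le_abs_self _
            _ ≤ _ := h1
        simpa [norm_inv, Pi.inv_def] using hnorm.inv_tendsto_atTop
      have := hinv.const_mul ((v ℓ k : ℂ) * (v ℓ i : ℂ) * (-(lam ℓ : ℂ)) ^ n)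
      simpa [div_eq_mul_inv] using this
    have := tendsto_finset_sum Finset.univ (fun ℓ _ => hterm ℓ)
    simpa [hRdef] using this
  have hzq : Tendsto (fun ω : ℝ =>
      (ω : ℂ) ^ 2 / (-(ω : ℂ) ^ 2 + I * (α : ℂ) * (ω : ℂ))) atTop (nhds (-1)) := by
    have h1 : Tendsto (fun ω : ℝ =>
        (-(ω : ℂ) ^ 2 + I * (α : ℂ) * (ω : ℂ)) / (ω : ℂ) ^ 2) atTop (nhds (-1)) := by
      have h3 : Tendsto (fun ω : ℝ => ((ω : ℂ))⁻¹) atTop (nhds 0) := by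
        have := (Complex.continuous_ofReal.tendsto 0).comp tendsto_inv_atTop_zero
        simpa [Function.comp_def] using this
      have h4 : Tendsto (fun ω : ℝ => -1 + I * (α : ℂ) * ((ω : ℂ))⁻¹)
          atTop (nhds (-1)) := by
        have := (h3.const_mul (I * (α : ℂ))).const_add (-1 : ℂ)
        simpa using this
      refine Tendsto.congr' ?_ h4
      filter_upwards [eventually_gt_atTop (0:ℝ)] with ω hω
      have hω0 : (ω : ℂ) ≠ 0 := by
        exact_mod_cast hω.ne'
      push_cast
      field_simp
    have h4 := h1.inv₀ (by norm_num)
    rw [show ((-1 : ℂ))⁻¹ = -1 by norm_num] at h4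
    refine h4.congr fun ω => ?_
    rw [inv_div]
  -- the main limit
  have hg : Tendsto (fun ω : ℝ =>
      ((ω : ℂ) ^ 2 / (-(ω : ℂ) ^ 2 + I * (α : ℂ) * (ω : ℂ))) ^ n * (C + R ω))
      atTop (nhds ((-1 : ℂ) ^ n * (C + 0))) :=
    (hzq.pow n).mul (tendsto_const_nhds.add hR0)
  have habs : Tendsto (fun ω : ℝ => ‖
      (((ω : ℂ) ^ 2 / (-(ω : ℂ) ^ 2 + I * (α : ℂ) * (ω : ℂ))) ^ n * (C + R ω))‖)
      atTop (nhds (‖((-1 : ℂ) ^ n * (C + 0))‖)) :=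
    (continuous_norm.tendsto _).comp hg
  have hval : ‖((-1 : ℂ) ^ n * (C + 0))‖ = |Sd| := by
    rw [hCdef]
    simp [Complex.norm_real]
  have hmain : Tendsto
      (fun ω : ℝ => ω ^ (2 * d + 1) *
        (ω * ‖(∑ ℓ, ((v ℓ k : ℂ) * (v ℓ i : ℂ)) /
          (-(ω : ℂ) ^ 2 + I * (α : ℂ) * (ω : ℂ) + (lam ℓ : ℂ)))‖))
      atTop (nhds |Sd|) := by
    rw [← hval]
    refine Tendsto.congr' ?_ habs
    filter_upwards [eventually_gt_atTop (0:ℝ)] with ω hω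
    have hzn : (-(ω : ℂ) ^ 2 + I * (α : ℂ) * (ω : ℂ)) ^ n ≠ 0 :=
      pow_ne_zero _ (hzne ω hω)
    have key : ((ω : ℂ) ^ 2 / (-(ω : ℂ) ^ 2 + I * (α : ℂ) * (ω : ℂ))) ^ n * (C + R ω)
        = (ω : ℂ) ^ (2 * n) * (∑ ℓ, ((v ℓ k : ℂ) * (v ℓ i : ℂ)) /
          (-(ω : ℂ) ^ 2 + I * (α : ℂ) * (ω : ℂ) + (lam ℓ : ℂ))) := by
      rw [hident ω hω, div_pow, ← pow_mul, div_mul_eq_mul_div, mul_div_assoc]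
    rw [key, norm_mul, norm_pow, Complex.norm_real, Real.norm_eq_abs, abs_of_pos hω]
    have h2n : 2 * n = 2 * d + 1 + 1 := by omega
    rw [h2n, pow_succ]
    ring
  refine ⟨Sd, hmain, ?_⟩
  have h1 := hmain.isBigO_one ℝ
  have h2 := h1.mul (isBigO_refl (fun ω : ℝ => (ω ^ (2 * d + 1))⁻¹) atTop)
  refine h2.congr' ?_ ?_
  · filter_upwards [eventually_gt_atTop (0:ℝ)] with ω hω
    have hne : (ω : ℝ) ^ (2 * d + 1) ≠ 0 := pow_ne_zero _ hω.ne'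
    field_simp
  · filter_upwards with ω
    simp
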